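/- For each k ≥ 0, any ε > 0, and τ ∈ ℍ, the limit lim_{t→∞} Θ̂_{k,μ}(τ, τ + it + ε) = θ̃_{k,μ}(τ) holds, where Θ̂_{k,μ}(τ,w) = Σ_{n ∈ L+μ} n^k erf(−i√(πi(w−τ)) n) e^{πi n² τ} and θ̃_{k,μ}(τ) = Σ_{n ∈ L+μ} sgn(n) n^k e^{πi n² τ}. -/

import Mathlib

open Complex MeasureTheory Filter

/-- The error function `erf(z) = (2/√π) ∫₀^z e^{-t²} dt`, extended to complex arguments. -/
noncomputable def cerf (z : ℂ) : ℂ :=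
  (2 / Real.sqrt Real.pi) * z * ∫ t in (0 : ℝ)..1, Complex.exp (-((t : ℂ) * z) ^ 2)

/-- The bivariate (false) theta function `Θ̂_{k,μ}(τ,w)`. -/
noncomputable def ThetaHat (M : ℕ) (k : ℕ) (μ : ℝ) (τ w : ℂ) : ℂ :=
  ∑' n : ℤ, ((Real.sqrt M * n + μ : ℝ) : ℂ) ^ k *
    cerf (-Complex.I * (Real.pi * Complex.I * (w - τ)) ^ ((1 : ℂ) / 2) *
      ((Real.sqrt M * n + μ : ℝ) : ℂ)) *
    Complex.exp (Real.pi * Complex.I * ((Real.sqrt M * n + μ : ℝ) : ℂ) ^ 2 * τ)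

/-- The false theta function `θ̃_{k,μ}(τ)`. -/
noncomputable def thetaTilde (M : ℕ) (k : ℕ) (μ : ℝ) (τ : ℂ) : ℂ :=
  ∑' n : ℤ, (Real.sign (Real.sqrt M * n + μ) : ℂ) * ((Real.sqrt M * n + μ : ℝ) : ℂ) ^ k *
    Complex.exp (Real.pi * Complex.I * ((Real.sqrt M * n + μ : ℝ) : ℂ) ^ 2 * τ)


section helpers
open Real intervalIntegral

lemma quadrant_cpow_half {z : ℂ} (hz : 0 < z.im) :
    0 < (z ^ ((1:ℂ)/2)).re ∧ 0 < (z ^ ((1:ℂ)/2)).im := by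
  have hz0 : z ≠ 0 := by
    intro h; rw [h] at hz; simp at hz
  have harg_pos : 0 < Complex.arg z := by
    rcases lt_or_eq_of_le (Complex.arg_nonneg_iff.mpr hz.le) with h | h
    · exact h
    · exfalso
      have := Complex.arg_eq_zero_iff.mp h.symm
      linarith [this.2, hz]
  have harg_lt : Complex.arg z < Real.pi := by
    rcases lt_or_eq_of_le (Complex.arg_le_pi z) with h | h
    · exact h
    · exfalso
      have := Complex.arg_eq_pi_iff.mp h
      linarith [this.2, hz]
  rw [Complex.cpow_def_of_ne_zero hz0]
  have him : (Complex.log z * ((1:ℂ)/2)).im = Complex.arg z / 2 := by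
    simp [Complex.mul_im, Complex.log_im]
    ring
  constructor
  · rw [Complex.exp_re, him]
    have : Real.cos (Complex.arg z / 2) > 0 := by
      apply Real.cos_pos_of_mem_Ioo
      constructor <;> [linarith [Real.pi_pos]; linarith]
    positivity
  · rw [Complex.exp_im, him]
    have : Real.sin (Complex.arg z / 2) > 0 := by
      apply Real.sin_pos_of_pos_of_lt_pi <;> linarith [Real.pi_pos]
    positivity


lemma sqrt_unique {z w : ℂ} (hz : 0 < z.re) (hw : 0 < w.re) (h : z ^ 2 = w ^ 2) : z = w := by
  have h2 : (z - w) * (z + w) = 0 := by linear_combination h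
  rcases mul_eq_zero.mp h2 with h3 | h3
  · exact sub_eq_zero.mp h3
  · exfalso
    have : (z + w).re = 0 := by rw [h3]; simp
    rw [Complex.add_re] at this; linarith


lemma cpow_half_mul_self {z : ℂ} (hz : z ≠ 0) : z ^ ((1:ℂ)/2) * z ^ ((1:ℂ)/2) = z := by
  rw [← Complex.cpow_add _ _ hz]
  norm_num


lemma abs_cpow_half {z : ℂ} (hz : z ≠ 0) : ‖z ^ ((1:ℂ)/2)‖ = Real.sqrt ‖z‖ := by
  rw [Complex.norm_cpow_of_ne_zero hz]
  simp [Real.sqrt_eq_rpow]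

section core
variable {ε t n : ℝ}

lemma s_re : ((Real.pi : ℂ) * Complex.I * (Complex.I * t + ε)).re = -(Real.pi * t) := by
  simp [Complex.mul_re, Complex.mul_im, Complex.add_re, Complex.add_im]

lemma s_im : ((Real.pi : ℂ) * Complex.I * (Complex.I * t + ε)).im = Real.pi * ε := by
  simp [Complex.mul_re, Complex.mul_im, Complex.add_re, Complex.add_im]

lemma s_ne (hε : 0 < ε) : ((Real.pi : ℂ) * Complex.I * (Complex.I * t + ε)) ≠ 0 := by
  intro h
  have h2 : ((Real.pi : ℂ) * Complex.I * (Complex.I * (t:ℝ) + ε)).im = Real.pi * ε := s_im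
  rw [h] at h2
  simp only [Complex.zero_im] at h2
  nlinarith [Real.pi_pos]

lemma c_sq (hε : 0 < ε) :
    (-Complex.I * ((Real.pi : ℂ) * Complex.I * (Complex.I * t + ε)) ^ ((1:ℂ)/2)) ^ 2
      = -((Real.pi : ℂ) * Complex.I * (Complex.I * t + ε)) := by
  have hx : (((Real.pi : ℂ) * Complex.I * (Complex.I * t + ε)) ^ ((1:ℂ)/2)) ^ 2
      = (Real.pi : ℂ) * Complex.I * (Complex.I * t + ε) := by
    rw [pow_two, cpow_half_mul_self (s_ne hε)]
  rw [mul_pow, hx, neg_sq, Complex.I_sq, neg_one_mul]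

lemma abs_c_le (hε : 0 < ε) (ht : 0 ≤ t) :
    ‖-Complex.I * ((Real.pi : ℂ) * Complex.I * (Complex.I * t + ε)) ^ ((1:ℂ)/2)‖
      ≤ Real.sqrt (Real.pi * t + Real.pi * ε) := by
  have hnegI : ‖-Complex.I‖ = 1 := by simp
  rw [norm_mul, hnegI, one_mul, abs_cpow_half (s_ne hε)]
  apply Real.sqrt_le_sqrt
  calc ‖_‖ ≤ |((Real.pi : ℂ) * Complex.I * (Complex.I * t + ε)).re|
        + |((Real.pi : ℂ) * Complex.I * (Complex.I * t + ε)).im| :=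
        Complex.norm_le_abs_re_add_abs_im _
    _ = Real.pi * t + Real.pi * ε := by
        rw [s_re, s_im, abs_neg, _root_.abs_of_nonneg (by positivity : (0:ℝ) ≤ Real.pi * t),
          _root_.abs_of_nonneg (by positivity : (0:ℝ) ≤ Real.pi * ε)]

lemma cerf_integrand (hε : 0 < ε) (u : ℝ) :
    -((u : ℂ) * (-Complex.I * ((Real.pi : ℂ) * Complex.I * (Complex.I * t + ε)) ^ ((1:ℂ)/2) * n)) ^ 2
      = -(((n : ℂ)^2 * (-((Real.pi : ℂ) * Complex.I * (Complex.I * t + ε)))) * (u : ℂ)^2) := by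
  have h := c_sq (t := t) hε
  linear_combination (-(u:ℂ)^2 * (n:ℂ)^2) * h

lemma cerf_eq_integral (hε : 0 < ε) :
    cerf (-Complex.I * ((Real.pi : ℂ) * Complex.I * (Complex.I * t + ε)) ^ ((1:ℂ)/2) * n)
      = (2 / Real.sqrt Real.pi)
        * (-Complex.I * ((Real.pi : ℂ) * Complex.I * (Complex.I * t + ε)) ^ ((1:ℂ)/2) * n)
        * ∫ u in (0:ℝ)..1,
            Complex.exp (-(((n : ℂ)^2 * (-((Real.pi : ℂ) * Complex.I * (Complex.I * t + ε)))) * (u : ℂ)^2)) := by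
  rw [cerf]
  congr 1
  apply intervalIntegral.integral_congr
  intro u _
  exact congrArg Complex.exp (cerf_integrand hε u)

lemma B_re (hε : 0 < ε) :
    (((n : ℂ)^2 * (-((Real.pi : ℂ) * Complex.I * (Complex.I * t + ε))))).re = n^2 * (Real.pi * t) := by
  simp [Complex.mul_re, Complex.mul_im, Complex.add_re, Complex.add_im, ← Complex.ofReal_pow]

lemma norm_exp_B (hε : 0 < ε) (u : ℝ) :
    ‖Complex.exp (-(((n : ℂ)^2 * (-((Real.pi : ℂ) * Complex.I * (Complex.I * t + ε)))) * (u : ℂ)^2))‖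
      = Real.exp (-(n^2 * (Real.pi * t)) * u^2) := by
  rw [Complex.norm_exp]
  congr 1
  simp [Complex.mul_re, Complex.mul_im, Complex.add_re, Complex.add_im, ← Complex.ofReal_pow]

lemma cerf_norm_le (hε : 0 < ε) (ht : 1 ≤ t) (n : ℝ) :
    ‖cerf (-Complex.I * ((Real.pi : ℂ) * Complex.I * (Complex.I * t + ε)) ^ ((1:ℂ)/2) * n)‖
      ≤ Real.sqrt (1 + ε) := by
  have hπ := Real.pi_pos
  have ht0 : (0:ℝ) < t := by linarith
  rcases eq_or_ne n 0 with rfl | hn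
  · rw [show ((0:ℝ):ℂ) = 0 from rfl, mul_zero]
    have : cerf 0 = 0 := by simp [cerf]
    rw [this, norm_zero]
    positivity
  have hA : 0 < n^2 * (Real.pi * t) := by positivity
  rw [cerf_eq_integral hε]
  rw [norm_mul, norm_mul]
  have h2 : ‖(2 / (Real.sqrt Real.pi : ℂ))‖ = 2 / Real.sqrt Real.pi := by
    rw [norm_div]
    simp only [Complex.norm_real, Real.norm_eq_abs, _root_.abs_of_nonneg (Real.sqrt_nonneg _)]
    norm_num
  have hcn : ‖(-Complex.I * ((Real.pi : ℂ) * Complex.I * (Complex.I * t + ε)) ^ ((1:ℂ)/2) * (n:ℂ))‖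
      ≤ Real.sqrt (Real.pi * t + Real.pi * ε) * |n| := by
    rw [norm_mul, Complex.norm_real, Real.norm_eq_abs]
    exact mul_le_mul_of_nonneg_right (abs_c_le hε ht0.le) (abs_nonneg n)
  have hint : ‖∫ u in (0:ℝ)..1,
      Complex.exp (-(((n : ℂ)^2 * (-((Real.pi : ℂ) * Complex.I * (Complex.I * t + ε)))) * (u : ℂ)^2))‖
      ≤ Real.sqrt (Real.pi / (n^2 * (Real.pi * t))) / 2 := by
    calc ‖_‖ ≤ ∫ u in (0:ℝ)..1, ‖Complex.exp (-(((n : ℂ)^2 * (-((Real.pi : ℂ) * Complex.I * (Complex.I * t + ε)))) * (u : ℂ)^2))‖ :=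
          intervalIntegral.norm_integral_le_integral_norm zero_le_one
      _ = ∫ u in (0:ℝ)..1, Real.exp (-(n^2 * (Real.pi * t)) * u^2) := by
          apply intervalIntegral.integral_congr
          intro u _
          exact norm_exp_B hε u
      _ ≤ ∫ u in Set.Ioi (0:ℝ), Real.exp (-(n^2 * (Real.pi * t)) * u^2) := by
          rw [intervalIntegral.integral_of_le zero_le_one]
          apply setIntegral_mono_set (integrable_exp_neg_mul_sq hA).integrableOn
          · filter_upwards with x using (Real.exp_pos _).le
          · exact Set.Ioc_subset_Ioi_self.eventuallyLE
      _ = Real.sqrt (Real.pi / (n^2 * (Real.pi * t))) / 2 := integral_gaussian_Ioi _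
  calc ‖(2 / (Real.sqrt Real.pi : ℂ))‖ * ‖_‖ * ‖_‖
      ≤ (2 / Real.sqrt Real.pi) * (Real.sqrt (Real.pi * t + Real.pi * ε) * |n|)
        * (Real.sqrt (Real.pi / (n^2 * (Real.pi * t))) / 2) := by
        rw [h2]
        apply mul_le_mul (mul_le_mul le_rfl hcn (norm_nonneg _) (by positivity)) hint
          (norm_nonneg _) (by positivity)
    _ ≤ Real.sqrt (1 + ε) := by
        have hπ' : (0:ℝ) < Real.sqrt Real.pi := Real.sqrt_pos.mpr hπ
        have hπt : (0:ℝ) < Real.sqrt (Real.pi * t) := Real.sqrt_pos.mpr (by positivity)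
        have hna : (0:ℝ) < |n| := abs_pos.mpr hn
        have h3 : Real.sqrt (Real.pi / (n^2 * (Real.pi * t)))
            = Real.sqrt Real.pi / (|n| * Real.sqrt (Real.pi * t)) := by
          rw [Real.sqrt_div Real.pi_pos.le, Real.sqrt_mul (sq_nonneg n), Real.sqrt_sq_eq_abs]
        rw [h3]
        have h4 : (2 / Real.sqrt Real.pi) * (Real.sqrt (Real.pi * t + Real.pi * ε) * |n|)
            * ((Real.sqrt Real.pi / (|n| * Real.sqrt (Real.pi * t))) / 2)
            = Real.sqrt (Real.pi * t + Real.pi * ε) / Real.sqrt (Real.pi * t) := by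
          field_simp
        rw [h4]
        rw [div_le_iff₀ hπt]
        rw [← Real.sqrt_mul (by positivity : (0:ℝ) ≤ 1 + ε)]
        apply Real.sqrt_le_sqrt
        nlinarith [mul_le_mul_of_nonneg_left ht (by positivity : (0:ℝ) ≤ Real.pi * ε)]

end core

section tendsto
variable {ε n : ℝ}

lemma B_im (t : ℝ) :
    (((n : ℂ)^2 * (-((Real.pi : ℂ) * Complex.I * (Complex.I * t + ε))))).im
      = -(n^2 * (Real.pi * ε)) := by
  simp [Complex.mul_re, Complex.mul_im, Complex.add_re, Complex.add_im, ← Complex.ofReal_pow]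

lemma norm_cn_le (hε : 0 < ε) {t : ℝ} (ht : 0 ≤ t) :
    ‖(-Complex.I * ((Real.pi : ℂ) * Complex.I * (Complex.I * t + ε)) ^ ((1:ℂ)/2) * (n:ℂ))‖
      ≤ Real.sqrt (Real.pi * t + Real.pi * ε) * |n| := by
  rw [norm_mul, Complex.norm_real, Real.norm_eq_abs]
  exact mul_le_mul_of_nonneg_right (abs_c_le hε ht) (abs_nonneg n)

lemma main_identity (hε : 0 < ε) {t : ℝ} (ht : 0 < t) (hn : n ≠ 0) :
    (2 / (Real.sqrt Real.pi : ℂ))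
      * (-Complex.I * ((Real.pi : ℂ) * Complex.I * (Complex.I * t + ε)) ^ ((1:ℂ)/2) * (n:ℂ))
      * ((((Real.pi : ℂ)) / ((n : ℂ)^2 * (-((Real.pi : ℂ) * Complex.I * (Complex.I * t + ε))))) ^ ((1:ℂ)/2) / 2)
      = ((Real.sign n : ℝ) : ℂ) := by
  have hπ := Real.pi_pos
  set s : ℂ := (Real.pi : ℂ) * Complex.I * (Complex.I * t + ε) with hs_def
  set B : ℂ := (n : ℂ)^2 * (-s) with hB_def
  have hBre : B.re = n^2 * (Real.pi * t) := B_re hε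
  have hBim : B.im = -(n^2 * (Real.pi * ε)) := B_im t
  have hBre' : 0 < B.re := by rw [hBre]; positivity
  have hB0 : B ≠ 0 := fun h => by rw [h] at hBre'; simp at hBre'
  have hs0 : s ≠ 0 := s_ne hε
  have hsim : 0 < s.im := by rw [s_im]; positivity
  have hq := quadrant_cpow_half hsim
  set c : ℂ := -Complex.I * s ^ ((1:ℂ)/2) with hc_def
  have hc_re : 0 < c.re := by
    have : c.re = (s ^ ((1:ℂ)/2)).im := by
      rw [hc_def]; simp [Complex.mul_re]
    rw [this]; exact hq.2
  have hc_im : c.im < 0 := by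
    have : c.im = -(s ^ ((1:ℂ)/2)).re := by
      rw [hc_def]; simp [Complex.mul_im]
    rw [this]; linarith [hq.1]
  have him : 0 < ((Real.pi : ℂ) / B).im := by
    rw [div_eq_mul_inv, Complex.im_ofReal_mul, Complex.inv_im]
    have hns : 0 < Complex.normSq B := Complex.normSq_pos.mpr hB0
    rw [hBim]
    have h1 : 0 < n^2 * (Real.pi * ε) := by positivity
    have h2 : 0 < Real.pi := hπ
    have := div_pos (by linarith : (0:ℝ) < -(-(n^2 * (Real.pi * ε)))) hns
    positivity
  have hd := quadrant_cpow_half him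
  set d : ℂ := ((Real.pi : ℂ) / B) ^ ((1:ℂ)/2) with hd_def
  have hcd_re : 0 < (c * d).re := by
    rw [Complex.mul_re]
    nlinarith [hq.1, hq.2, hd.1, hd.2]
  have hπB0 : (Real.pi : ℂ) / B ≠ 0 :=
    div_ne_zero (Complex.ofReal_ne_zero.mpr hπ.ne') hB0
  have hn' : (n : ℂ) ≠ 0 := Complex.ofReal_ne_zero.mpr hn
  have hd2 : d^2 = (Real.pi : ℂ) / B := by rw [pow_two, hd_def, cpow_half_mul_self hπB0]
  have hc2 : c^2 = -s := c_sq hε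
  have hrhs : (((Real.sqrt Real.pi / |n| : ℝ)) : ℂ)^2 = (Real.pi : ℂ) / ((n:ℂ)^2) := by
    have : (Real.sqrt Real.pi / |n|)^2 = Real.pi / n^2 := by
      rw [div_pow, Real.sq_sqrt hπ.le, _root_.sq_abs]
    rw [← Complex.ofReal_pow, this]
    push_cast
    ring
  have hs0' : -s ≠ 0 := neg_ne_zero.mpr hs0
  have hsq : (c * d)^2 = (((Real.sqrt Real.pi / |n| : ℝ)) : ℂ)^2 := by
    rw [mul_pow, hc2, hd2, hrhs, hB_def]
    field_simp
  have hq0 : 0 < ((((Real.sqrt Real.pi / |n| : ℝ)) : ℂ)).re := by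
    rw [Complex.ofReal_re]
    have : 0 < |n| := abs_pos.mpr hn
    have : 0 < Real.sqrt Real.pi := Real.sqrt_pos.mpr hπ
    positivity
  have hcd : c * d = (((Real.sqrt Real.pi / |n| : ℝ)) : ℂ) := sqrt_unique hcd_re hq0 hsq
  have hsqrtπ : ((Real.sqrt Real.pi : ℝ) : ℂ) ≠ 0 :=
    Complex.ofReal_ne_zero.mpr (Real.sqrt_pos.mpr hπ).ne'
  have hsign : (Real.sign n : ℝ) = n / |n| := by
    rcases hn.lt_or_gt with h | h
    · rw [Real.sign_of_neg h, abs_of_neg h]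
      field_simp
    · rw [Real.sign_of_pos h, abs_of_pos h]
      field_simp
  have key : (2 / ((Real.sqrt Real.pi : ℝ) : ℂ)) * (c * (n:ℂ)) * (d / 2)
      = ((n:ℂ) / ((Real.sqrt Real.pi : ℝ) : ℂ)) * (c * d) := by ring
  rw [key, hcd, hsign]
  push_cast
  have hn0 : ((|n| : ℝ) : ℂ) ≠ 0 := Complex.ofReal_ne_zero.mpr (abs_pos.mpr hn).ne'
  field_simp

end tendsto

section tend2
variable {ε n : ℝ}

lemma cerf_decomp (hε : 0 < ε) {t : ℝ} (ht : 0 < t) (hn : n ≠ 0) :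
    cerf (-Complex.I * ((Real.pi : ℂ) * Complex.I * (Complex.I * t + ε)) ^ ((1:ℂ)/2) * n)
      - ((Real.sign n : ℝ) : ℂ)
    = -((2 / (Real.sqrt Real.pi : ℂ))
        * (-Complex.I * ((Real.pi : ℂ) * Complex.I * (Complex.I * t + ε)) ^ ((1:ℂ)/2) * (n:ℂ))
        * ∫ u in Set.Ioi (1:ℝ),
            Complex.exp (-(((n : ℂ)^2 * (-((Real.pi : ℂ) * Complex.I * (Complex.I * t + ε)))) * (u : ℂ)^2))) := by
  have hπ := Real.pi_pos
  set s : ℂ := (Real.pi : ℂ) * Complex.I * (Complex.I * t + ε) with hs_def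
  set B : ℂ := (n : ℂ)^2 * (-s) with hB_def
  have hBre : B.re = n^2 * (Real.pi * t) := B_re hε
  have hBre' : 0 < B.re := by rw [hBre]; positivity
  have hInt : Integrable (fun u : ℝ => Complex.exp (-(B * (u:ℂ)^2))) := by
    simpa only [neg_mul] using integrable_cexp_neg_mul_sq hBre'
  have h01 : ∫ u in Set.Ioi (0:ℝ), Complex.exp (-(B * (u:ℂ)^2))
      = (∫ u in Set.Ioc (0:ℝ) 1, Complex.exp (-(B * (u:ℂ)^2)))
        + ∫ u in Set.Ioi (1:ℝ), Complex.exp (-(B * (u:ℂ)^2)) := by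
    rw [← Set.Ioc_union_Ioi_eq_Ioi zero_le_one,
      setIntegral_union (Set.Ioc_disjoint_Ioi le_rfl) measurableSet_Ioi
        hInt.integrableOn hInt.integrableOn]
  have hgauss : ∫ u in Set.Ioi (0:ℝ), Complex.exp (-(B * (u:ℂ)^2))
      = ((Real.pi : ℂ) / B) ^ ((1:ℂ)/2) / 2 := by
    simpa only [neg_mul] using integral_gaussian_complex_Ioi hBre'
  have hsplit : ∫ u in (0:ℝ)..1, Complex.exp (-(B * (u:ℂ)^2))
      = ((Real.pi : ℂ) / B) ^ ((1:ℂ)/2) / 2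
        - ∫ u in Set.Ioi (1:ℝ), Complex.exp (-(B * (u:ℂ)^2)) := by
    rw [intervalIntegral.integral_of_le zero_le_one]
    rw [← hgauss, h01]
    ring
  rw [cerf_eq_integral hε, ← hB_def, ← hs_def, hsplit]
  rw [mul_sub, main_identity hε ht hn]
  ring

lemma tail_norm_le (hε : 0 < ε) {t : ℝ} (ht : 1 ≤ t) (hn : n ≠ 0) :
    ‖(2 / (Real.sqrt Real.pi : ℂ))
        * (-Complex.I * ((Real.pi : ℂ) * Complex.I * (Complex.I * t + ε)) ^ ((1:ℂ)/2) * (n:ℂ))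
        * ∫ u in Set.Ioi (1:ℝ),
            Complex.exp (-(((n : ℂ)^2 * (-((Real.pi : ℂ) * Complex.I * (Complex.I * t + ε)))) * (u : ℂ)^2))‖
      ≤ (Real.sqrt 2 * Real.sqrt (1 + ε)) * Real.exp (-(n^2 * Real.pi / 2) * t) := by
  have hπ := Real.pi_pos
  have ht0 : (0:ℝ) < t := by linarith
  have hA : 0 < n^2 * (Real.pi * t) := by positivity
  have hA2 : 0 < n^2 * (Real.pi * t) / 2 := by positivity
  set A : ℝ := n^2 * (Real.pi * t) with hA_def
  -- bound the integral
  have hIntA : Integrable (fun u : ℝ => Real.exp (-(A * u^2))) := by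
    simpa only [neg_mul] using integrable_exp_neg_mul_sq hA
  have hIntA2 : Integrable (fun u : ℝ => Real.exp (-(A/2)) * Real.exp (-(A/2 * u^2))) := by
    apply Integrable.const_mul
    simpa only [neg_mul] using integrable_exp_neg_mul_sq (by positivity : (0:ℝ) < A/2)
  have hint1 : ‖∫ u in Set.Ioi (1:ℝ),
      Complex.exp (-(((n : ℂ)^2 * (-((Real.pi : ℂ) * Complex.I * (Complex.I * t + ε)))) * (u : ℂ)^2))‖
      ≤ ∫ u in Set.Ioi (1:ℝ), Real.exp (-(A * u^2)) := by
    calc ‖_‖ ≤ ∫ u in Set.Ioi (1:ℝ),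
        ‖Complex.exp (-(((n : ℂ)^2 * (-((Real.pi : ℂ) * Complex.I * (Complex.I * t + ε)))) * (u : ℂ)^2))‖ :=
        MeasureTheory.norm_integral_le_integral_norm _
      _ = ∫ u in Set.Ioi (1:ℝ), Real.exp (-(A * u^2)) := by
        apply setIntegral_congr_fun measurableSet_Ioi
        intro u _
        dsimp only
        rw [norm_exp_B hε u]
        congr 1
        rw [hA_def]
        ring
  have hint2 : ∫ u in Set.Ioi (1:ℝ), Real.exp (-(A * u^2))
      ≤ Real.exp (-(A/2)) * (Real.sqrt (Real.pi / (A/2)) / 2) := by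
    calc ∫ u in Set.Ioi (1:ℝ), Real.exp (-(A * u^2))
        ≤ ∫ u in Set.Ioi (1:ℝ), Real.exp (-(A/2)) * Real.exp (-(A/2 * u^2)) := by
          apply setIntegral_mono_on hIntA.integrableOn hIntA2.integrableOn measurableSet_Ioi
          intro u hu
          rw [← Real.exp_add]
          apply Real.exp_le_exp.mpr
          have hu1 : 1 ≤ u := le_of_lt hu
          have hu2 : 1 ≤ u^2 := by nlinarith
          nlinarith [mul_nonneg hA.le (by linarith : (0:ℝ) ≤ u^2 - 1)]
      _ = Real.exp (-(A/2)) * ∫ u in Set.Ioi (1:ℝ), Real.exp (-(A/2 * u^2)) := by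
          rw [MeasureTheory.integral_const_mul]
      _ ≤ Real.exp (-(A/2)) * ∫ u in Set.Ioi (0:ℝ), Real.exp (-(A/2 * u^2)) := by
          apply mul_le_mul_of_nonneg_left _ (Real.exp_pos _).le
          apply setIntegral_mono_set
            (by simpa only [neg_mul] using (integrable_exp_neg_mul_sq (by positivity : (0:ℝ) < A/2)).integrableOn)
          · filter_upwards with x using (Real.exp_pos _).le
          · exact (Set.Ioi_subset_Ioi zero_le_one).eventuallyLE
      _ = Real.exp (-(A/2)) * (Real.sqrt (Real.pi / (A/2)) / 2) := by
          congr 1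
          simpa only [neg_mul] using integral_gaussian_Ioi (A/2)
  rw [norm_mul, norm_mul]
  have h2 : ‖(2 / ((Real.sqrt Real.pi : ℝ) : ℂ))‖ = 2 / Real.sqrt Real.pi := by
    rw [norm_div]
    simp only [Complex.norm_real, Real.norm_eq_abs, _root_.abs_of_nonneg (Real.sqrt_nonneg _)]
    norm_num
  calc ‖(2 / ((Real.sqrt Real.pi : ℝ) : ℂ))‖ * ‖_‖ * ‖_‖
      ≤ (2 / Real.sqrt Real.pi) * (Real.sqrt (Real.pi * t + Real.pi * ε) * |n|)
        * (Real.exp (-(A/2)) * (Real.sqrt (Real.pi / (A/2)) / 2)) := by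
        rw [h2]
        have h5 : (0:ℝ) < 2 / Real.sqrt Real.pi := by positivity
        apply mul_le_mul (mul_le_mul le_rfl (norm_cn_le hε ht0.le) (norm_nonneg _) h5.le)
          (hint1.trans hint2) (norm_nonneg _) (by positivity)
    _ ≤ (Real.sqrt 2 * Real.sqrt (1 + ε)) * Real.exp (-(n^2 * Real.pi / 2) * t) := by
        have hπ' : (0:ℝ) < Real.sqrt Real.pi := Real.sqrt_pos.mpr hπ
        have hπt : (0:ℝ) < Real.sqrt (Real.pi * t) := Real.sqrt_pos.mpr (by positivity)
        have hna : (0:ℝ) < |n| := abs_pos.mpr hn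
        have h3 : Real.sqrt (Real.pi / (A/2))
            = Real.sqrt 2 * Real.sqrt Real.pi / (|n| * Real.sqrt (Real.pi * t)) := by
          rw [show Real.pi / (A/2) = 2 * (Real.pi / (n^2 * (Real.pi * t))) by rw [hA_def]; ring]
          rw [Real.sqrt_mul (by norm_num : (0:ℝ) ≤ 2),
            Real.sqrt_div Real.pi_pos.le, Real.sqrt_mul (sq_nonneg n), Real.sqrt_sq_eq_abs]
          ring
        have hexp : Real.exp (-(A/2)) = Real.exp (-(n^2 * Real.pi / 2) * t) := by
          rw [hA_def]; congr 1; ring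
        rw [h3, hexp]
        have h4 : (2 / Real.sqrt Real.pi) * (Real.sqrt (Real.pi * t + Real.pi * ε) * |n|)
            * (Real.exp (-(n^2 * Real.pi / 2) * t)
              * (Real.sqrt 2 * Real.sqrt Real.pi / (|n| * Real.sqrt (Real.pi * t)) / 2))
            = (Real.sqrt 2 * (Real.sqrt (Real.pi * t + Real.pi * ε) / Real.sqrt (Real.pi * t)))
              * Real.exp (-(n^2 * Real.pi / 2) * t) := by
          field_simp
        rw [h4]
        apply mul_le_mul_of_nonneg_right _ (Real.exp_pos _).le
        apply mul_le_mul_of_nonneg_left _ (Real.sqrt_nonneg 2)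
        rw [div_le_iff₀ hπt, ← Real.sqrt_mul (by positivity : (0:ℝ) ≤ 1 + ε)]
        apply Real.sqrt_le_sqrt
        nlinarith [mul_le_mul_of_nonneg_left ht (by positivity : (0:ℝ) ≤ Real.pi * ε)]

lemma cerf_tendsto (hε : 0 < ε) (hn : n ≠ 0) :
    Filter.Tendsto (fun t : ℝ =>
        cerf (-Complex.I * ((Real.pi : ℂ) * Complex.I * (Complex.I * t + ε)) ^ ((1:ℂ)/2) * n))
      Filter.atTop (nhds ((Real.sign n : ℝ) : ℂ)) := by
  rw [← tendsto_sub_nhds_zero_iff]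
  apply squeeze_zero_norm' (a := fun t : ℝ =>
    (Real.sqrt 2 * Real.sqrt (1 + ε)) * Real.exp (-(n^2 * Real.pi / 2) * t))
  · filter_upwards [Filter.eventually_ge_atTop (1:ℝ)] with t ht
    rw [cerf_decomp hε (by linarith) hn, norm_neg]
    exact tail_norm_le hε ht hn
  · have h1 : Filter.Tendsto (fun t : ℝ => -(n^2 * Real.pi / 2) * t) Filter.atTop Filter.atBot := by
      apply Filter.Tendsto.const_mul_atTop_of_neg _ Filter.tendsto_id
      have := Real.pi_pos
      have hn2 : 0 < n^2 := by positivity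
      nlinarith
    have h2 := Real.tendsto_exp_atBot.comp h1
    have h3 := h2.const_mul (Real.sqrt 2 * Real.sqrt (1 + ε))
    simpa using h3

end tend2

section summable
open Real

set_option maxHeartbeats 800000 in
lemma summable_bound {y : ℝ} (hy : 0 < y) (M : ℕ) (hM : 0 < M) (μ' : ℝ) (k : ℕ) :
    Summable fun m : ℤ =>
      |Real.sqrt M * m + μ'|^k * Real.exp (-(Real.pi * (Real.sqrt M * m + μ')^2 * y)) := by
  have hπ := Real.pi_pos
  have hM0 : (0:ℝ) ≤ Real.sqrt M := Real.sqrt_nonneg _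
  set T : ℝ := y * M with hT_def
  set S : ℝ := y * Real.sqrt M * |μ'| with hS_def
  have hMpos : (0:ℝ) < (M:ℝ) := Nat.cast_pos.mpr hM
  have hT' : 0 < T := by rw [hT_def]; positivity
  set C : ℝ := (Real.sqrt M + |μ'|)^k * 2^k with hC_def
  have hC0 : 0 ≤ C := by positivity
  have hmaj : Summable (fun m : ℤ => C * ((|(m:ℝ)|^k) * Real.exp (-Real.pi * (T*(m:ℝ)^2 - 2*S*|(m:ℝ)|))
      + Real.exp (-Real.pi * (T*(m:ℝ)^2 - 2*S*|(m:ℝ)|)))) := by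
    apply Summable.mul_left
    apply Summable.add
    · have := summable_pow_mul_jacobiTheta₂_term_bound S hT' k
      simpa only [Int.cast_abs] using this
    · have := summable_pow_mul_jacobiTheta₂_term_bound S hT' 0
      simpa [Int.cast_abs] using this
  apply Summable.of_nonneg_of_le (fun m => by positivity) _ hmaj
  intro m
  set x : ℝ := Real.sqrt M * m + μ' with hx_def
  have hsq : (Real.sqrt M)^2 = (M:ℝ) := Real.sq_sqrt (Nat.cast_nonneg M)
  have h4 : Real.exp (-(Real.pi * x^2 * y)) ≤ Real.exp (-Real.pi * (T*(m:ℝ)^2 - 2*S*|(m:ℝ)|)) := by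
    apply Real.exp_le_exp.mpr
    have hmm : μ' * (m:ℝ) ≥ -(|μ'| * |(m:ℝ)|) := by
      rw [← abs_mul]
      exact neg_abs_le _
    have hkey : 2 * (y * Real.sqrt M) * (μ' * m) ≥ 2 * (y * Real.sqrt M) * (-(|μ'| * |(m:ℝ)|)) := by
      apply mul_le_mul_of_nonneg_left hmm (by positivity)
    have hx2 : x^2 = (M:ℝ)*(m:ℝ)^2 + 2*Real.sqrt M * μ' * m + μ'^2 := by
      rw [hx_def]; nlinarith [hsq]
    have hμsq : 0 ≤ y * μ'^2 := by positivity
    have hx2y : x^2 * y = (M:ℝ)*(m:ℝ)^2*y + 2*Real.sqrt M*μ'*(m:ℝ)*y + μ'^2*y := by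
      rw [hx2]; ring
    have hcore : T*(m:ℝ)^2 - 2*S*|(m:ℝ)| ≤ x^2 * y := by
      rw [hT_def, hS_def, hx2y]
      nlinarith [hkey, hμsq]
    nlinarith [mul_le_mul_of_nonneg_left hcore hπ.le]
  have h1 : |x| ≤ (Real.sqrt M + |μ'|) * (1 + |(m:ℝ)|) := by
    calc |x| ≤ |Real.sqrt M * m| + |μ'| := abs_add_le _ _
      _ = Real.sqrt M * |(m:ℝ)| + |μ'| := by rw [abs_mul, _root_.abs_of_nonneg hM0]
      _ ≤ (Real.sqrt M + |μ'|) * (1 + |(m:ℝ)|) := by nlinarith [abs_nonneg (m:ℝ), abs_nonneg μ']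
  have h2 : |x|^k ≤ (Real.sqrt M + |μ'|)^k * (1 + |(m:ℝ)|)^k := by
    rw [← mul_pow]
    exact pow_le_pow_left₀ (abs_nonneg x) h1 k
  have h3 : (1 + |(m:ℝ)|)^k ≤ 2^k * (|(m:ℝ)|^k + 1) := by
    rcases le_total |(m:ℝ)| 1 with h | h
    · calc (1 + |(m:ℝ)|)^k ≤ 2^k := pow_le_pow_left₀ (by positivity) (by linarith) k
        _ ≤ 2^k * (|(m:ℝ)|^k + 1) :=
            le_mul_of_one_le_right (by positivity)
              (le_add_of_nonneg_left (pow_nonneg (abs_nonneg _) k))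
    · calc (1 + |(m:ℝ)|)^k ≤ (2*|(m:ℝ)|)^k := pow_le_pow_left₀ (by positivity) (by linarith) k
        _ = 2^k * |(m:ℝ)|^k := mul_pow 2 _ k
        _ ≤ 2^k * (|(m:ℝ)|^k + 1) :=
            mul_le_mul_of_nonneg_left (by linarith) (by positivity)
  calc |x|^k * Real.exp (-(Real.pi * x^2 * y))
      ≤ (C * (|(m:ℝ)|^k + 1)) * Real.exp (-Real.pi * (T*(m:ℝ)^2 - 2*S*|(m:ℝ)|)) := by
        apply mul_le_mul _ h4 (Real.exp_pos _).le (by positivity)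
        calc |x|^k ≤ (Real.sqrt M + |μ'|)^k * (1 + |(m:ℝ)|)^k := h2
          _ ≤ (Real.sqrt M + |μ'|)^k * (2^k * (|(m:ℝ)|^k + 1)) :=
              mul_le_mul_of_nonneg_left h3 (by positivity)
          _ = C * (|(m:ℝ)|^k + 1) := by rw [hC_def]; ring
    _ = C * ((|(m:ℝ)|^k) * Real.exp (-Real.pi * (T*(m:ℝ)^2 - 2*S*|(m:ℝ)|))
          + Real.exp (-Real.pi * (T*(m:ℝ)^2 - 2*S*|(m:ℝ)|))) := by ring

end summable


lemma cerf_zero : cerf 0 = 0 := by simp [cerf]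

lemma norm_theta_exp (n : ℝ) (τ : ℂ) :
    ‖Complex.exp ((Real.pi : ℂ) * Complex.I * ((n:ℝ):ℂ)^2 * τ)‖
      = Real.exp (-(Real.pi * n^2 * τ.im)) := by
  rw [Complex.norm_exp]
  congr 1
  simp [Complex.mul_re, Complex.mul_im, ← Complex.ofReal_pow]


end helpers

theorem thetaHat_limit (M : ℕ) (hM : 0 < M) (μ : ℝ) (k : ℕ) (ε : ℝ) (hε : 0 < ε)
    (τ : ℂ) (hτ : 0 < τ.im) :
    Tendsto (fun t : ℝ => ThetaHat M k μ τ (τ + Complex.I * t + ε)) atTop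
      (nhds (thetaTilde M k μ τ)) := by
  have hw : ∀ t : ℝ, τ + Complex.I * t + (ε:ℂ) - τ = Complex.I * t + ε := fun t => by ring
  unfold ThetaHat thetaTilde
  simp only [hw]
  apply tendsto_tsum_of_dominated_convergence
    (bound := fun m : ℤ => Real.sqrt (1+ε) *
      (|Real.sqrt M * m + μ|^k * Real.exp (-(Real.pi * (Real.sqrt M * m + μ)^2 * τ.im))))
  · exact (summable_bound hτ M hM μ k).mul_left _
  · intro m
    by_cases hn : Real.sqrt M * (m:ℝ) + μ = 0
    · simp only [hn]
      simp only [Complex.ofReal_zero, mul_zero, cerf_zero, Real.sign_zero, zero_mul, mul_zero]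
      exact tendsto_const_nhds
    · have h := cerf_tendsto (n := Real.sqrt M * (m:ℝ) + μ) hε hn
      have h2 := (h.const_mul (((Real.sqrt M * (m:ℝ) + μ : ℝ):ℂ)^k)).mul_const
        (Complex.exp ((Real.pi:ℂ) * Complex.I * ((Real.sqrt M * (m:ℝ) + μ : ℝ):ℂ)^2 * τ))
      have heq : ((Real.sign (Real.sqrt M * (m:ℝ) + μ) : ℝ):ℂ)
            * ((Real.sqrt M * (m:ℝ) + μ : ℝ):ℂ)^k
            * Complex.exp ((Real.pi:ℂ) * Complex.I * ((Real.sqrt M * (m:ℝ) + μ : ℝ):ℂ)^2 * τ)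
          = ((Real.sqrt M * (m:ℝ) + μ : ℝ):ℂ)^k
            * ((Real.sign (Real.sqrt M * (m:ℝ) + μ) : ℝ):ℂ)
            * Complex.exp ((Real.pi:ℂ) * Complex.I * ((Real.sqrt M * (m:ℝ) + μ : ℝ):ℂ)^2 * τ) := by
        ring
      rw [heq]
      exact h2
  · filter_upwards [Filter.eventually_ge_atTop (1:ℝ)] with t ht
    intro m
    rw [norm_mul, norm_mul, norm_pow, Complex.norm_real, Real.norm_eq_abs, norm_theta_exp]
    calc |Real.sqrt M * (m:ℝ) + μ|^k
          * ‖cerf (-Complex.I * ((Real.pi:ℂ) * Complex.I * (Complex.I * t + ε)) ^ ((1:ℂ)/2)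
              * ((Real.sqrt M * (m:ℝ) + μ : ℝ):ℂ))‖
          * Real.exp (-(Real.pi * (Real.sqrt M * (m:ℝ) + μ)^2 * τ.im))
        ≤ |Real.sqrt M * (m:ℝ) + μ|^k * Real.sqrt (1+ε)
          * Real.exp (-(Real.pi * (Real.sqrt M * (m:ℝ) + μ)^2 * τ.im)) := by
          apply mul_le_mul_of_nonneg_right _ (Real.exp_pos _).le
          exact mul_le_mul_of_nonneg_left (cerf_norm_le hε ht _) (by positivity)
      _ = Real.sqrt (1+ε) * (|Real.sqrt M * (m:ℝ) + μ|^k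
          * Real.exp (-(Real.pi * (Real.sqrt M * (m:ℝ) + μ)^2 * τ.im))) := by ring
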